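/- For any topological space X, player TWO has a winning strategy in the compact-clopen game on X if and only if player TWO has a winning strategy in the K-quasi-component-clopen game on X. -/
import Mathlib


/-- `X` is zero-dimensional: it is nonempty and has a base consisting of clopen sets. -/
def ZeroDim (X : Type*) [TopologicalSpace X] : Prop :=
  Nonempty X ∧ ∀ (x : X) (U : Set X), IsOpen U → x ∈ U →
    ∃ C : Set X, IsClopen C ∧ x ∈ C ∧ C ⊆ U

/-- `𝒰` is a cover of `X` consisting of sets satisfying `P`
(e.g. an open cover for `P = IsOpen`, a clopen cover for `P = IsClopen`). -/
def IsCover {X : Type*} (P : Set X → Prop) (𝒰 : Set (Set X)) : Prop :=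
  (∀ U ∈ 𝒰, P U) ∧ ⋃₀ 𝒰 = Set.univ

/-- The selection principle `S_fin(P-covers, P-covers)`: for every sequence of
`P`-covers `u n` there are finite subsets `v n ⊆ u n` whose union is a cover. -/
def SelFin {X : Type*} (P : Set X → Prop) : Prop :=
  ∀ u : ℕ → Set (Set X), (∀ n, IsCover P (u n)) →
    ∃ v : ℕ → Set (Set X), (∀ n, (v n).Finite ∧ v n ⊆ u n) ∧
      (⋃ n, ⋃₀ v n) = Set.univ

/-- Player ONE has a winning strategy in the selection game `G_fin(P-covers, P-covers)`:
a strategy `σ`, depending on TWO's previous moves, always playing `P`-covers, such that for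
every sequence of legal responses by TWO (finite subsets of the cover just played),
the union of TWO's choices fails to cover. -/
def ONEWinsSel {X : Type*} (P : Set X → Prop) : Prop :=
  ∃ σ : List (Set (Set X)) → Set (Set X),
    (∀ h, IsCover P (σ h)) ∧
    ∀ v : ℕ → Set (Set X),
      (∀ n, (v n).Finite ∧ v n ⊆ σ (List.ofFn fun i : Fin n => v i)) →
      (⋃ n, ⋃₀ v n) ≠ Set.univ

/-- Player TWO has a winning strategy in the selection game `G_fin(P-covers, P-covers)`:
a strategy `τ`, depending on ONE's moves so far, such that against every sequence of
`P`-covers played by ONE, TWO's responses are legal (finite subsets of the corresponding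
cover) and their union is a cover. -/
def TWOWinsSel {X : Type*} (P : Set X → Prop) : Prop :=
  ∃ τ : List (Set (Set X)) → Set (Set X),
    ∀ u : ℕ → Set (Set X), (∀ n, IsCover P (u n)) →
      (∀ n, (τ (List.ofFn fun i : Fin (n + 1) => u i)).Finite ∧
        τ (List.ofFn fun i : Fin (n + 1) => u i) ⊆ u n) ∧
      (⋃ n, ⋃₀ τ (List.ofFn fun i : Fin (n + 1) => u i)) = Set.univ

/-- Player ONE has a winning strategy in the `Q`-`R` game (in round `n`, ONE picks a set
`K n` with `Q (K n)` and TWO responds with a set `U n` with `R (U n)` and `K n ⊆ U n`;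
ONE wins if `⋃ n, U n = univ`).  E.g. `Q = IsCompact`, `R = IsClopen` is the
compact-clopen game; `R = IsOpen` gives the compact-open game. -/
def ONEWinsCC {X : Type*} (Q R : Set X → Prop) : Prop :=
  ∃ σ : List (Set X) → Set X,
    (∀ h, Q (σ h)) ∧
    ∀ v : ℕ → Set X,
      (∀ n, R (v n) ∧ σ (List.ofFn fun i : Fin n => v i) ⊆ v n) →
      (⋃ n, v n) = Set.univ

/-- Player TWO has a winning strategy in the `Q`-`R` game: a strategy `τ`, depending on
ONE's moves so far, such that against every sequence of sets satisfying `Q` played by ONE,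
TWO's responses satisfy `R`, contain ONE's corresponding sets, and fail to cover `X`. -/
def TWOWinsCC {X : Type*} (Q R : Set X → Prop) : Prop :=
  ∃ τ : List (Set X) → Set X,
    ∀ u : ℕ → Set X, (∀ n, Q (u n)) →
      (∀ n, R (τ (List.ofFn fun i : Fin (n + 1) => u i)) ∧
        u n ⊆ τ (List.ofFn fun i : Fin (n + 1) => u i)) ∧
      (⋃ n, τ (List.ofFn fun i : Fin (n + 1) => u i)) ≠ Set.univ

/-- A subset `K` of `X` is mildly compact if every cover of `K` by clopen subsets
of `X` contains a finite subcover. -/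
def MildlyCompact {X : Type*} [TopologicalSpace X] (K : Set X) : Prop :=
  ∀ 𝒰 : Set (Set X), (∀ U ∈ 𝒰, IsClopen U) → K ⊆ ⋃₀ 𝒰 →
    ∃ 𝒱 ⊆ 𝒰, 𝒱.Finite ∧ K ⊆ ⋃₀ 𝒱

/-- The quasi-component of a subset `K` of `X`: the intersection of all clopen
subsets of `X` containing `K`. -/
def QuasiComp {X : Type*} [TopologicalSpace X] (K : Set X) : Set X :=
  ⋂₀ {C : Set X | IsClopen C ∧ K ⊆ C}

/-- TWO has a winning strategy in the compact-clopen game on `X` iff TWO has a winning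
strategy in the `K`-quasi-component-clopen game on `X` (where ONE plays
quasi-components of compact subsets of `X`). -/

lemma subset_quasiComp {X : Type*} [TopologicalSpace X] (K : Set X) : K ⊆ QuasiComp K := by
  intro x hx C hC
  exact hC.2 hx

lemma quasiComp_subset {X : Type*} [TopologicalSpace X] {K U : Set X}
    (hU : IsClopen U) (hKU : K ⊆ U) : QuasiComp K ⊆ U :=
  fun x hx => hx U ⟨hU, hKU⟩

open Classical in
noncomputable def pickK {X : Type*} [TopologicalSpace X] (A : Set X) : Set X :=
  if h : ∃ K : Set X, IsCompact K ∧ A = QuasiComp K then h.choose else ∅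

theorem stmt12 {X : Type*} [TopologicalSpace X] :
    TWOWinsCC (X := X) IsCompact IsClopen ↔
      TWOWinsCC (X := X) (fun A => ∃ K : Set X, IsCompact K ∧ A = QuasiComp K) IsClopen := by
  constructor
  · rintro ⟨τ, hτ⟩
    refine ⟨fun h => τ (h.map pickK), ?_⟩
    intro u hu
    set u' : ℕ → Set X := fun n => pickK (u n) with hu'
    have hcomp : ∀ n, IsCompact (u' n) ∧ u n = QuasiComp (u' n) := by
      intro n
      have h := hu n
      simp only [hu', pickK, dif_pos h]
      exact ⟨h.choose_spec.1, h.choose_spec.2⟩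
    obtain ⟨h1, h2⟩ := hτ u' (fun n => (hcomp n).1)
    have hmap : ∀ n, (List.ofFn fun i : Fin (n+1) => u i).map pickK
        = List.ofFn fun i : Fin (n+1) => u' i := by
      intro n; rw [List.map_ofFn]; rfl
    constructor
    · intro n
      simp only [hmap n]
      refine ⟨(h1 n).1, ?_⟩
      rw [(hcomp n).2]
      exact quasiComp_subset (h1 n).1 (h1 n).2
    · intro hcon
      apply h2
      rw [← hcon]
      exact Set.iUnion_congr fun n => by simp only [hmap n]
  · rintro ⟨τ, hτ⟩
    refine ⟨fun h => τ (h.map QuasiComp), ?_⟩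
    intro u hu
    set u' : ℕ → Set X := fun n => QuasiComp (u n) with hu'
    obtain ⟨h1, h2⟩ := hτ u' (fun n => ⟨u n, hu n, rfl⟩)
    have hmap : ∀ n, (List.ofFn fun i : Fin (n+1) => u i).map QuasiComp
        = List.ofFn fun i : Fin (n+1) => u' i := by
      intro n; rw [List.map_ofFn]; rfl
    constructor
    · intro n
      simp only [hmap n]
      exact ⟨(h1 n).1, (subset_quasiComp (u n)).trans (h1 n).2⟩
    · intro hcon
      apply h2
      rw [← hcon]
      exact Set.iUnion_congr fun n => by simp only [hmap n]
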